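/- arXiv:quant-ph/0301032 — 3 statements merged into one kernel-verified Lean document; each statement's English description precedes it below -/
import Mathlib

section
/- Let H_S, H_B be finite-dimensional Hilbert spaces and let H = H_S ⊗ I_B + I_S ⊗ H_B + ∑_α S_α ⊗ B_α be a Hamiltonian on H_S ⊗ H_B. Suppose H̃ ⊆ H_S is a subspace such that S_α |k⟩ = c_α |k⟩ for all α and all |k⟩ ∈ H̃ (with constants c_α independent of |k⟩), and H_S leaves H̃ invariant. Then for any |ψ⟩ ∈ H̃ and |μ⟩ ∈ H_B, exp(-iHt)(|ψ⟩ ⊗ |μ⟩) = (exp(-iH_S t)|ψ⟩) ⊗ (exp(-iH_c t)|μ⟩), where H_c = H_B + ∑_α c_α B_α. -/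
open Kronecker

namespace Stmt5Aux
open Matrix NormedSpace

variable {n m : ℕ}

lemma kron_mulVec (P : Matrix (Fin n) (Fin n) ℂ) (Q : Matrix (Fin m) (Fin m) ℂ)
    (x : Fin n → ℂ) (y : Fin m → ℂ) :
    (P ⊗ₖ Q).mulVec (fun p => x p.1 * y p.2) = fun p => P.mulVec x p.1 * Q.mulVec y p.2 := by
  funext p
  simp only [Matrix.mulVec, dotProduct, Fintype.sum_prod_type, kroneckerMap_apply]
  rw [Finset.sum_mul_sum]
  exact Finset.sum_congr rfl fun i _ => Finset.sum_congr rfl fun j _ => by ring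

/-- `A ↦ A ⊗ₖ 1` as a ring hom. -/
def kronR (n m : ℕ) : Matrix (Fin n) (Fin n) ℂ →+* Matrix (Fin n × Fin m) (Fin n × Fin m) ℂ where
  toFun A := A ⊗ₖ (1 : Matrix (Fin m) (Fin m) ℂ)
  map_one' := Matrix.one_kronecker_one
  map_mul' A B := by rw [← Matrix.mul_kronecker_mul, Matrix.one_mul]
  map_zero' := Matrix.zero_kronecker _
  map_add' A B := Matrix.add_kronecker A B 1

/-- `B ↦ 1 ⊗ₖ B` as a ring hom. -/
def kronL (n m : ℕ) : Matrix (Fin m) (Fin m) ℂ →+* Matrix (Fin n × Fin m) (Fin n × Fin m) ℂ where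
  toFun B := (1 : Matrix (Fin n) (Fin n) ℂ) ⊗ₖ B
  map_one' := Matrix.one_kronecker_one
  map_mul' A B := by rw [← Matrix.mul_kronecker_mul, Matrix.one_mul]
  map_zero' := Matrix.kronecker_zero _
  map_add' A B := Matrix.kronecker_add _ A B

lemma continuous_kronR : Continuous (kronR n m) :=
  continuous_matrix fun i j =>
    (continuous_apply_apply i.1 j.1).mul continuous_const

lemma continuous_kronL : Continuous (kronL n m) :=
  continuous_matrix fun i j =>
    continuous_const.mul (continuous_apply_apply i.2 j.2)

lemma exp_kron (P : Matrix (Fin n) (Fin n) ℂ) (Q : Matrix (Fin m) (Fin m) ℂ) :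
    exp (P ⊗ₖ (1 : Matrix (Fin m) (Fin m) ℂ) + (1 : Matrix (Fin n) (Fin n) ℂ) ⊗ₖ Q)
      = exp P ⊗ₖ exp Q := by
  have hcomm : Commute (P ⊗ₖ (1 : Matrix (Fin m) (Fin m) ℂ))
      ((1 : Matrix (Fin n) (Fin n) ℂ) ⊗ₖ Q) := by
    show _ = _
    rw [← Matrix.mul_kronecker_mul, ← Matrix.mul_kronecker_mul, one_mul, mul_one, one_mul, mul_one]
  rw [Matrix.exp_add_of_commute _ _ hcomm]
  letI : SeminormedRing (Matrix (Fin n) (Fin n) ℂ) := Matrix.linftyOpSemiNormedRing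
  letI : NormedRing (Matrix (Fin n) (Fin n) ℂ) := Matrix.linftyOpNormedRing
  letI : NormedAlgebra ℂ (Matrix (Fin n) (Fin n) ℂ) := Matrix.linftyOpNormedAlgebra
  letI : NormedAlgebra ℚ (Matrix (Fin n) (Fin n) ℂ) := Matrix.linftyOpNormedAlgebra (R := ℚ)
  letI : SeminormedRing (Matrix (Fin m) (Fin m) ℂ) := Matrix.linftyOpSemiNormedRing
  letI : NormedRing (Matrix (Fin m) (Fin m) ℂ) := Matrix.linftyOpNormedRing
  letI : NormedAlgebra ℂ (Matrix (Fin m) (Fin m) ℂ) := Matrix.linftyOpNormedAlgebra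
  letI : NormedAlgebra ℚ (Matrix (Fin m) (Fin m) ℂ) := Matrix.linftyOpNormedAlgebra (R := ℚ)
  letI : SeminormedRing (Matrix (Fin n × Fin m) (Fin n × Fin m) ℂ) := Matrix.linftyOpSemiNormedRing
  letI : NormedRing (Matrix (Fin n × Fin m) (Fin n × Fin m) ℂ) := Matrix.linftyOpNormedRing
  letI : NormedAlgebra ℂ (Matrix (Fin n × Fin m) (Fin n × Fin m) ℂ) := Matrix.linftyOpNormedAlgebra
  letI : NormedAlgebra ℚ (Matrix (Fin n × Fin m) (Fin n × Fin m) ℂ) := Matrix.linftyOpNormedAlgebra (R := ℚ)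
  have h1 : P ⊗ₖ (1 : Matrix (Fin m) (Fin m) ℂ) = kronR n m P := rfl
  have h2 : (1 : Matrix (Fin n) (Fin n) ℂ) ⊗ₖ Q = kronL n m Q := rfl
  rw [h1, h2]
  erw [← map_exp (kronR n m) continuous_kronR, ← map_exp (kronL n m) continuous_kronL]
  show (exp P ⊗ₖ (1 : Matrix (Fin m) (Fin m) ℂ)) * ((1 : Matrix (Fin n) (Fin n) ℂ) ⊗ₖ exp Q) = _
  rw [← Matrix.mul_kronecker_mul, mul_one, one_mul]

lemma sum_mulVec' {N ι : Type*} [Fintype N] (s : Finset ι) (f : ι → Matrix N N ℂ) (x : N → ℂ) :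
    (∑ i ∈ s, f i).mulVec x = ∑ i ∈ s, (f i).mulVec x := by
  funext j
  simp only [Matrix.mulVec, dotProduct, Matrix.sum_apply, Finset.sum_apply, Finset.sum_mul]
  rw [Finset.sum_comm]

/-- `mulVec` at a fixed vector, as a linear map in the matrix. -/
noncomputable def mulVecL {N : Type*} [Fintype N] (x : N → ℂ) : Matrix N N ℂ →ₗ[ℂ] (N → ℂ) where
  toFun A := A.mulVec x
  map_add' A B := Matrix.add_mulVec A B x
  map_smul' a A := Matrix.smul_mulVec a A x

end Stmt5Aux

open Matrix Stmt5Aux in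
set_option maxHeartbeats 2000000 in
/-- Hamiltonian DFS condition: with `H = H_S ⊗ I + I ⊗ H_B + ∑_α S_α ⊗ B_α`, if all
`k ∈ H̃` satisfy `S_α k = c_α k` and `H_S` leaves `H̃` invariant, then for `ψ ∈ H̃` the
joint evolution factorizes:
`e^{-iHt}(ψ ⊗ μ) = (e^{-iH_S t}ψ) ⊗ (e^{-iH_c t}μ)` with `H_c = H_B + ∑_α c_α B_α`. -/
theorem stmt_5 {n m K : ℕ}
    (HS : Matrix (Fin n) (Fin n) ℂ) (HB : Matrix (Fin m) (Fin m) ℂ)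
    (S : Fin K → Matrix (Fin n) (Fin n) ℂ) (B : Fin K → Matrix (Fin m) (Fin m) ℂ)
    (hHS : HS.IsHermitian) (hHB : HB.IsHermitian)
    (hSh : ∀ α, (S α).IsHermitian) (hBh : ∀ α, (B α).IsHermitian)
    (Ht : Submodule ℂ (Fin n → ℂ)) (c : Fin K → ℂ)
    (hc : ∀ α, ∀ k ∈ Ht, (S α).mulVec k = c α • k)
    (hinv : ∀ k ∈ Ht, HS.mulVec k ∈ Ht)
    (t : ℝ) (ψ : Fin n → ℂ) (hψ : ψ ∈ Ht) (μ : Fin m → ℂ) :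
    (NormedSpace.exp ((-(Complex.I * t)) •
        (HS ⊗ₖ (1 : Matrix (Fin m) (Fin m) ℂ) + (1 : Matrix (Fin n) (Fin n) ℂ) ⊗ₖ HB +
          ∑ α, S α ⊗ₖ B α))).mulVec (fun p => ψ p.1 * μ p.2) =
      fun p => ((NormedSpace.exp ((-(Complex.I * t)) • HS)).mulVec ψ) p.1 *
        ((NormedSpace.exp ((-(Complex.I * t)) • (HB + ∑ α, c α • B α))).mulVec μ) p.2 := by
  classical
  set s : ℂ := -(Complex.I * t) with hs
  set Hc : Matrix (Fin m) (Fin m) ℂ := HB + ∑ α, c α • B α with hHc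
  set Hfull : Matrix (Fin n × Fin m) (Fin n × Fin m) ℂ :=
    HS ⊗ₖ (1 : Matrix (Fin m) (Fin m) ℂ) + (1 : Matrix (Fin n) (Fin n) ℂ) ⊗ₖ HB +
      ∑ α, S α ⊗ₖ B α with hHfull
  set H' : Matrix (Fin n × Fin m) (Fin n × Fin m) ℂ :=
    HS ⊗ₖ (1 : Matrix (Fin m) (Fin m) ℂ) + (1 : Matrix (Fin n) (Fin n) ℂ) ⊗ₖ Hc with hH'
  set W : Submodule ℂ ((Fin n × Fin m) → ℂ) :=
    Submodule.span ℂ {x | ∃ k ∈ Ht, ∃ w : Fin m → ℂ, x = fun p => k p.1 * w p.2} with hW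
  -- H' applied to a generator
  have hH'gen : ∀ k ∈ Ht, ∀ w : Fin m → ℂ,
      H'.mulVec (fun p => k p.1 * w p.2)
        = fun p => (HS.mulVec k) p.1 * w p.2 + k p.1 * (Hc.mulVec w) p.2 := by
    intro k hk w
    rw [hH', add_mulVec, kron_mulVec, kron_mulVec, one_mulVec, one_mulVec]
    rfl
  -- Hfull agrees with H' on generators
  have hgen : ∀ k ∈ Ht, ∀ w : Fin m → ℂ,
      Hfull.mulVec (fun p => k p.1 * w p.2) = H'.mulVec (fun p => k p.1 * w p.2) := by
    intro k hk w
    have hsum : (∑ α, S α ⊗ₖ B α).mulVec (fun p => k p.1 * w p.2)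
        = ∑ α, (S α ⊗ₖ B α).mulVec (fun p => k p.1 * w p.2) :=
      sum_mulVec' _ _ _
    have hterm : ∀ α, (S α ⊗ₖ B α).mulVec (fun p => k p.1 * w p.2)
        = fun p => k p.1 * (c α * ((B α).mulVec w) p.2) := by
      intro α
      rw [kron_mulVec, hc α k hk]
      funext p
      simp only [Pi.smul_apply, smul_eq_mul]
      ring
    have hHcw : Hc.mulVec w = HB.mulVec w + ∑ α, c α • ((B α).mulVec w) := by
      rw [hHc, add_mulVec]
      congr 1
      rw [sum_mulVec']
      exact Finset.sum_congr rfl fun α _ => Matrix.smul_mulVec _ _ _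
    rw [hHfull, add_mulVec, add_mulVec, hsum, hH'gen k hk w, kron_mulVec, kron_mulVec,
      one_mulVec, one_mulVec]
    funext p
    simp only [Pi.add_apply, Finset.sum_apply, hterm, hHcw, Pi.smul_apply, smul_eq_mul]
    rw [mul_add, Finset.mul_sum, add_assoc]
  -- the key invariance fact on W
  have key : ∀ x ∈ W, Hfull.mulVec x = H'.mulVec x ∧ H'.mulVec x ∈ W := by
    intro x hx
    induction hx using Submodule.span_induction with
    | mem x hx =>
      obtain ⟨k, hk, w, rfl⟩ := hx
      refine ⟨hgen k hk w, ?_⟩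
      rw [hH'gen k hk w]
      exact W.add_mem
        (Submodule.subset_span ⟨HS.mulVec k, hinv k hk, w, rfl⟩)
        (Submodule.subset_span ⟨k, hk, Hc.mulVec w, rfl⟩)
    | zero => exact ⟨by rw [mulVec_zero, mulVec_zero], by rw [mulVec_zero]; exact W.zero_mem⟩
    | add x y hx hy ihx ihy =>
      exact ⟨by rw [mulVec_add, mulVec_add, ihx.1, ihy.1],
        by rw [mulVec_add]; exact W.add_mem ihx.2 ihy.2⟩
    | smul a x hx ih =>
      exact ⟨by rw [mulVec_smul, mulVec_smul, ih.1],
        by rw [mulVec_smul]; exact W.smul_mem a ih.2⟩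
  -- powers of the scaled Hamiltonians
  have keys : ∀ x ∈ W, (s • Hfull).mulVec x = (s • H').mulVec x ∧ (s • H').mulVec x ∈ W := by
    intro x hx
    obtain ⟨h1, h2⟩ := key x hx
    exact ⟨by rw [smul_mulVec, smul_mulVec, h1],
      by rw [smul_mulVec]; exact W.smul_mem s h2⟩
  have pow_eq : ∀ j : ℕ, ∀ x ∈ W,
      ((s • Hfull) ^ j).mulVec x = ((s • H') ^ j).mulVec x ∧ ((s • H') ^ j).mulVec x ∈ W := by
    intro j
    induction j with
    | zero => intro x hx; rw [pow_zero, pow_zero]; exact ⟨rfl, by rw [one_mulVec]; exact hx⟩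
    | succ j ih =>
      intro x hx
      obtain ⟨h1, h2⟩ := keys x hx
      refine ⟨?_, ?_⟩
      · rw [pow_succ, pow_succ, ← mulVec_mulVec, ← mulVec_mulVec, h1, (ih _ h2).1]
      · rw [pow_succ, ← mulVec_mulVec]
        exact (ih _ h2).2
  -- now the analytic part
  have hψμ : (fun p : Fin n × Fin m => ψ p.1 * μ p.2) ∈ W :=
    Submodule.subset_span ⟨ψ, hψ, μ, rfl⟩
  letI : SeminormedRing (Matrix (Fin n × Fin m) (Fin n × Fin m) ℂ) := Matrix.linftyOpSemiNormedRing
  letI : NormedRing (Matrix (Fin n × Fin m) (Fin n × Fin m) ℂ) := Matrix.linftyOpNormedRing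
  letI : NormedAlgebra ℂ (Matrix (Fin n × Fin m) (Fin n × Fin m) ℂ) := Matrix.linftyOpNormedAlgebra
  have hLcont : Continuous (mulVecL (fun p : Fin n × Fin m => ψ p.1 * μ p.2)) :=
    LinearMap.continuous_of_finiteDimensional _
  let L : Matrix (Fin n × Fin m) (Fin n × Fin m) ℂ →L[ℂ] ((Fin n × Fin m) → ℂ) :=
    ⟨mulVecL (fun p : Fin n × Fin m => ψ p.1 * μ p.2), hLcont⟩
  have exp_swap : (NormedSpace.exp (s • Hfull)).mulVec (fun p => ψ p.1 * μ p.2)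
      = (NormedSpace.exp (s • H')).mulVec (fun p => ψ p.1 * μ p.2) := by
    have e1 : (NormedSpace.exp (s • Hfull)).mulVec (fun p => ψ p.1 * μ p.2)
        = ∑' j : ℕ, (j.factorial : ℂ)⁻¹ • ((s • Hfull) ^ j).mulVec (fun p => ψ p.1 * μ p.2) := by
      rw [NormedSpace.exp_eq_tsum ℂ]
      exact (L.map_tsum (NormedSpace.expSeries_summable' (𝕂 := ℂ) (s • Hfull))).trans
        (by simp only [_root_.map_smul]; rfl)
    have e2 : (NormedSpace.exp (s • H')).mulVec (fun p => ψ p.1 * μ p.2)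
        = ∑' j : ℕ, (j.factorial : ℂ)⁻¹ • ((s • H') ^ j).mulVec (fun p => ψ p.1 * μ p.2) := by
      rw [NormedSpace.exp_eq_tsum ℂ]
      exact (L.map_tsum (NormedSpace.expSeries_summable' (𝕂 := ℂ) (s • H'))).trans
        (by simp only [_root_.map_smul]; rfl)
    rw [e1, e2]
    exact tsum_congr fun j => by rw [(pow_eq j _ hψμ).1]
  rw [exp_swap]
  have hsplit : s • H' = (s • HS) ⊗ₖ (1 : Matrix (Fin m) (Fin m) ℂ)
      + (1 : Matrix (Fin n) (Fin n) ℂ) ⊗ₖ (s • Hc) := by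
    rw [hH', smul_add, Matrix.smul_kronecker, Matrix.kronecker_smul]
  rw [hsplit, exp_kron, kron_mulVec]
end

section
/- Under the hypotheses of the Hamiltonian DFS condition (S_α |k⟩ = c_α |k⟩ for all |k⟩ in an H_S-invariant subspace H̃), if the initial state is ρ_S(0) ⊗ ρ_B(0) with ρ_S(0) supported on H̃, then the reduced system state ρ_S(t) = Tr_B[e^{-iHt} (ρ_S(0) ⊗ ρ_B(0)) e^{iHt}] equals U_S(t) ρ_S(0) U_S(t)† with U_S(t) = exp(-iH_S t); i.e., the reduced evolution on H̃ is unitary. -/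
open Kronecker Matrix
open scoped ComplexOrder

/-- Partial trace over the bath: `(Tr_B ρ)_{ij} = ∑_k ρ_{(i,k),(j,k)}`. -/
noncomputable def ptraceB {n m : ℕ} (ρ : Matrix (Fin n × Fin m) (Fin n × Fin m) ℂ) :
    Matrix (Fin n) (Fin n) ℂ :=
  Matrix.of fun i j => ∑ k : Fin m, ρ (i, k) (j, k)

section Aux

open NormedSpace

lemma ptraceB_kron {n m : ℕ} (X : Matrix (Fin n) (Fin n) ℂ) (Y : Matrix (Fin m) (Fin m) ℂ) :
    ptraceB (X ⊗ₖ Y) = Y.trace • X := by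
  ext i j
  simp only [ptraceB, Matrix.trace, Matrix.diag, Matrix.smul_apply, smul_eq_mul, of_apply,
    kroneckerMap_apply, Finset.sum_mul]
  exact Finset.sum_congr rfl fun _ _ => mul_comm _ _

lemma conjTranspose_kron {n m : ℕ} (X : Matrix (Fin n) (Fin n) ℂ) (Y : Matrix (Fin m) (Fin m) ℂ) :
    (X ⊗ₖ Y)ᴴ = Xᴴ ⊗ₖ Yᴴ := by
  ext ⟨i,k⟩ ⟨j,l⟩
  simp [conjTranspose_apply, mul_comm]

/-- `A ↦ A ⊗ₖ 1` as a ring hom. -/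
def kronRightHom (n m : ℕ) :
    Matrix (Fin n) (Fin n) ℂ →+* Matrix (Fin n × Fin m) (Fin n × Fin m) ℂ where
  toFun A := A ⊗ₖ (1 : Matrix (Fin m) (Fin m) ℂ)
  map_one' := Matrix.one_kronecker_one
  map_mul' A B := by rw [← Matrix.mul_kronecker_mul, one_mul]
  map_zero' := Matrix.zero_kronecker _
  map_add' A B := Matrix.add_kronecker A B _

/-- `B ↦ 1 ⊗ₖ B` as a ring hom. -/
def kronLeftHom (n m : ℕ) :
    Matrix (Fin m) (Fin m) ℂ →+* Matrix (Fin n × Fin m) (Fin n × Fin m) ℂ where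
  toFun B := (1 : Matrix (Fin n) (Fin n) ℂ) ⊗ₖ B
  map_one' := Matrix.one_kronecker_one
  map_mul' A B := by rw [← Matrix.mul_kronecker_mul, one_mul]
  map_zero' := Matrix.kronecker_zero _
  map_add' A B := Matrix.kronecker_add _ A B

lemma exp_kron_right {n m : ℕ} (A : Matrix (Fin n) (Fin n) ℂ) :
    exp (A ⊗ₖ (1 : Matrix (Fin m) (Fin m) ℂ)) = exp A ⊗ₖ 1 := by
  letI : SeminormedRing (Matrix (Fin n) (Fin n) ℂ) := Matrix.linftyOpSemiNormedRing
  letI : NormedRing (Matrix (Fin n) (Fin n) ℂ) := Matrix.linftyOpNormedRing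
  letI : NormedAlgebra ℂ (Matrix (Fin n) (Fin n) ℂ) := Matrix.linftyOpNormedAlgebra
  letI : NormedAlgebra ℚ (Matrix (Fin n) (Fin n) ℂ) := Matrix.linftyOpNormedAlgebra
  letI : SeminormedRing (Matrix (Fin n × Fin m) (Fin n × Fin m) ℂ) :=
    Matrix.linftyOpSemiNormedRing
  letI : NormedRing (Matrix (Fin n × Fin m) (Fin n × Fin m) ℂ) := Matrix.linftyOpNormedRing
  letI : NormedAlgebra ℂ (Matrix (Fin n × Fin m) (Fin n × Fin m) ℂ) :=
    Matrix.linftyOpNormedAlgebra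
  have hcont : Continuous (kronRightHom n m) := by
    apply continuous_matrix
    intro i j
    exact (continuous_apply_apply i.1 j.1).mul continuous_const
  exact (map_exp (kronRightHom n m) hcont A).symm

lemma exp_kron_left {n m : ℕ} (B : Matrix (Fin m) (Fin m) ℂ) :
    exp ((1 : Matrix (Fin n) (Fin n) ℂ) ⊗ₖ B) = 1 ⊗ₖ exp B := by
  letI : SeminormedRing (Matrix (Fin m) (Fin m) ℂ) := Matrix.linftyOpSemiNormedRing
  letI : NormedRing (Matrix (Fin m) (Fin m) ℂ) := Matrix.linftyOpNormedRing
  letI : NormedAlgebra ℂ (Matrix (Fin m) (Fin m) ℂ) := Matrix.linftyOpNormedAlgebra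
  letI : NormedAlgebra ℚ (Matrix (Fin m) (Fin m) ℂ) := Matrix.linftyOpNormedAlgebra
  letI : SeminormedRing (Matrix (Fin n × Fin m) (Fin n × Fin m) ℂ) :=
    Matrix.linftyOpSemiNormedRing
  letI : NormedRing (Matrix (Fin n × Fin m) (Fin n × Fin m) ℂ) := Matrix.linftyOpNormedRing
  letI : NormedAlgebra ℂ (Matrix (Fin n × Fin m) (Fin n × Fin m) ℂ) :=
    Matrix.linftyOpNormedAlgebra
  have hcont : Continuous (kronLeftHom n m) := by
    apply continuous_matrix
    intro i j
    exact continuous_const.mul (continuous_apply_apply i.2 j.2)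
  exact (map_exp (kronLeftHom n m) hcont B).symm

lemma exp_mul_congr {N : Type*} [Fintype N] [DecidableEq N]
    (A B ρ : Matrix N N ℂ) (h : ∀ j : ℕ, A ^ j * ρ = B ^ j * ρ) :
    exp A * ρ = exp B * ρ := by
  letI : SeminormedRing (Matrix N N ℂ) := Matrix.linftyOpSemiNormedRing
  letI : NormedRing (Matrix N N ℂ) := Matrix.linftyOpNormedRing
  letI : NormedAlgebra ℂ (Matrix N N ℂ) := Matrix.linftyOpNormedAlgebra
  rw [exp_eq_tsum ℂ]
  beta_reduce
  erw [← (expSeries_summable' (𝕂 := ℂ) A).tsum_mul_right,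
    ← (expSeries_summable' (𝕂 := ℂ) B).tsum_mul_right]
  congr 1; funext j
  rw [smul_mul_assoc, smul_mul_assoc, h]

lemma kron_mulVec_slice {n m : ℕ} (A : Matrix (Fin n) (Fin n) ℂ) (Bm : Matrix (Fin m) (Fin m) ℂ)
    (x : Fin n × Fin m → ℂ) (k : Fin m) :
    (fun i => (A ⊗ₖ Bm).mulVec x (i, k)) =
      ∑ k' : Fin m, Bm k k' • A.mulVec (fun i' => x (i', k')) := by
  funext i
  simp only [Matrix.mulVec, dotProduct, kroneckerMap_apply, Fintype.sum_prod_type,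
    Finset.sum_apply, Pi.smul_apply, smul_eq_mul, Finset.mul_sum]
  rw [Finset.sum_comm]
  exact Finset.sum_congr rfl fun k' _ => Finset.sum_congr rfl fun i' _ => by ring

lemma sum_mulVec' {ι p : Type*} [Fintype p] (s : Finset ι) (M : ι → Matrix p p ℂ) (x : p → ℂ) :
    (∑ a ∈ s, M a).mulVec x = ∑ a ∈ s, (M a).mulVec x := by
  funext i
  simp only [Matrix.mulVec, dotProduct, Matrix.sum_apply, Finset.sum_apply,
    Finset.sum_mul]
  exact Finset.sum_comm

lemma sum_one_smul' {n m : ℕ} (v : Fin m → Fin n → ℂ) (k : Fin m) :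
    ∑ k' : Fin m, (1 : Matrix (Fin m) (Fin m) ℂ) k k' • v k' = v k := by
  simp [Matrix.one_apply, ite_smul, Finset.sum_ite_eq]

lemma key_slice {n m K : ℕ}
    (HS : Matrix (Fin n) (Fin n) ℂ) (HB : Matrix (Fin m) (Fin m) ℂ)
    (S : Fin K → Matrix (Fin n) (Fin n) ℂ) (B : Fin K → Matrix (Fin m) (Fin m) ℂ)
    (Ht : Submodule ℂ (Fin n → ℂ)) (c : Fin K → ℂ)
    (hc : ∀ α, ∀ k ∈ Ht, (S α).mulVec k = c α • k)
    (hinv : ∀ k ∈ Ht, HS.mulVec k ∈ Ht)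
    (x : Fin n × Fin m → ℂ) (hx : ∀ k, (fun i => x (i, k)) ∈ Ht) :
    (HS ⊗ₖ (1 : Matrix (Fin m) (Fin m) ℂ) + (1 : Matrix (Fin n) (Fin n) ℂ) ⊗ₖ HB +
        ∑ α, S α ⊗ₖ B α).mulVec x =
      (HS ⊗ₖ (1 : Matrix (Fin m) (Fin m) ℂ) +
        (1 : Matrix (Fin n) (Fin n) ℂ) ⊗ₖ (HB + ∑ α, c α • B α)).mulVec x ∧
    ∀ k, (fun i =>
      (HS ⊗ₖ (1 : Matrix (Fin m) (Fin m) ℂ) +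
        (1 : Matrix (Fin n) (Fin n) ℂ) ⊗ₖ (HB + ∑ α, c α • B α)).mulVec x (i, k)) ∈ Ht := by
  set xs : Fin m → (Fin n → ℂ) := fun k i => x (i, k) with hxs
  have hslice1 : ∀ k, (fun i =>
      (HS ⊗ₖ (1 : Matrix (Fin m) (Fin m) ℂ) + (1 : Matrix (Fin n) (Fin n) ℂ) ⊗ₖ HB +
        ∑ α, S α ⊗ₖ B α).mulVec x (i, k)) =
      HS.mulVec (xs k) + (∑ k', HB k k' • xs k') +
        ∑ α, ∑ k', (c α * B α k k') • xs k' := by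
    intro k
    have e1 := kron_mulVec_slice HS (1 : Matrix (Fin m) (Fin m) ℂ) x k
    have e2 := kron_mulVec_slice (1 : Matrix (Fin n) (Fin n) ℂ) HB x k
    have e3 : ∀ α, (fun i => (S α ⊗ₖ B α).mulVec x (i, k)) =
        ∑ k', (c α * B α k k') • xs k' := by
      intro α
      rw [kron_mulVec_slice]
      refine Finset.sum_congr rfl fun k' _ => ?_
      rw [hc α (xs k') (hx k'), smul_smul, mul_comm]
    funext i
    rw [add_mulVec, add_mulVec, sum_mulVec']
    show ((HS ⊗ₖ 1).mulVec x) (i,k) + ((1 ⊗ₖ HB).mulVec x) (i,k)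
        + (∑ α, (S α ⊗ₖ B α).mulVec x) (i,k) = _
    rw [congrFun e1 i, congrFun e2 i]
    have : (∑ α, (S α ⊗ₖ B α).mulVec x) (i,k) = ∑ α, ((S α ⊗ₖ B α).mulVec x) (i,k) :=
      Finset.sum_apply _ _ _
    rw [this]
    have : ∀ α : Fin K, ((S α ⊗ₖ B α).mulVec x) (i,k) = (∑ k', (c α * B α k k') • xs k') i :=
      fun α => congrFun (e3 α) i
    simp only [this]
    have h1 : (∑ k', (1 : Matrix (Fin m) (Fin m) ℂ) k k' • HS.mulVec (xs k')) i
        = HS.mulVec (xs k) i := congrFun (sum_one_smul' (fun k' => HS.mulVec (xs k')) k) i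
    have h2 : ∀ k', (1 : Matrix (Fin n) (Fin n) ℂ).mulVec (xs k') = xs k' :=
      fun k' => Matrix.one_mulVec _
    change (∑ k', (1 : Matrix (Fin m) (Fin m) ℂ) k k' • HS.mulVec (xs k')) i +
      (∑ k', HB k k' • (1 : Matrix (Fin n) (Fin n) ℂ).mulVec (xs k')) i + _ = _
    simp only [h2] at e2 ⊢
    simp [h1, Finset.sum_apply]
  have hslice2 : ∀ k, (fun i =>
      (HS ⊗ₖ (1 : Matrix (Fin m) (Fin m) ℂ) +
        (1 : Matrix (Fin n) (Fin n) ℂ) ⊗ₖ (HB + ∑ α, c α • B α)).mulVec x (i, k)) =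
      HS.mulVec (xs k) + (∑ k', HB k k' • xs k') +
        ∑ α, ∑ k', (c α * B α k k') • xs k' := by
    intro k
    have e1 := kron_mulVec_slice HS (1 : Matrix (Fin m) (Fin m) ℂ) x k
    have e2 := kron_mulVec_slice (1 : Matrix (Fin n) (Fin n) ℂ) (HB + ∑ α, c α • B α) x k
    funext i
    rw [add_mulVec]
    show ((HS ⊗ₖ 1).mulVec x) (i,k) + ((1 ⊗ₖ (HB + ∑ α, c α • B α)).mulVec x) (i,k) = _
    rw [congrFun e1 i, congrFun e2 i]
    have h1 : (∑ k', (1 : Matrix (Fin m) (Fin m) ℂ) k k' • HS.mulVec (xs k')) i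
        = HS.mulVec (xs k) i := congrFun (sum_one_smul' (fun k' => HS.mulVec (xs k')) k) i
    have h2 : ∀ k', (1 : Matrix (Fin n) (Fin n) ℂ).mulVec (xs k') = xs k' :=
      fun k' => Matrix.one_mulVec _
    change (∑ k', (1 : Matrix (Fin m) (Fin m) ℂ) k k' • HS.mulVec (xs k')) i +
      (∑ k', (HB + ∑ α, c α • B α) k k' • (1 : Matrix (Fin n) (Fin n) ℂ).mulVec (xs k')) i = _
    simp only [h2, h1]
    have h3 : ∀ k', (HB + ∑ α, c α • B α) k k' • xs k'
        = HB k k' • xs k' + ∑ α, (c α * B α k k') • xs k' := by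
      intro k'
      simp only [Matrix.add_apply, Matrix.sum_apply, Matrix.smul_apply, smul_eq_mul,
        add_smul, Finset.sum_smul]
    simp only [h3, Finset.sum_apply, Pi.add_apply]
    rw [Finset.sum_add_distrib]
    have := Finset.sum_comm (s := (Finset.univ : Finset (Fin m)))
      (t := (Finset.univ : Finset (Fin K)))
      (f := fun k' α => ((c α * B α k k') • xs k') i)
    simp only [Finset.sum_apply, Pi.smul_apply, smul_eq_mul] at this ⊢
    rw [this]
    ring_nf
  constructor
  · funext ik
    obtain ⟨i, k⟩ := ik
    rw [congrFun (hslice1 k) i, congrFun (hslice2 k) i]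
  · intro k
    rw [hslice2 k]
    refine Submodule.add_mem _ (Submodule.add_mem _ (hinv _ (hx k)) ?_) ?_
    · exact Submodule.sum_mem _ fun k' _ => Submodule.smul_mem _ _ (hx k')
    · exact Submodule.sum_mem _ fun α _ =>
        Submodule.sum_mem _ fun k' _ => Submodule.smul_mem _ _ (hx k')

lemma pow_mul_eq {N : Type*} [Fintype N] [DecidableEq N]
    (Hf H' ρ : Matrix N N ℂ) (P : (N → ℂ) → Prop)
    (hkey : ∀ x, P x → Hf.mulVec x = H'.mulVec x ∧ P (H'.mulVec x))
    (hρ : ∀ j, P (fun i => ρ i j)) :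
    ∀ j : ℕ, Hf ^ j * ρ = H' ^ j * ρ := by
  have col_mul : ∀ (A M : Matrix N N ℂ) j,
      (fun i => (A * M) i j) = A.mulVec (fun i' => M i' j) := by
    intro A M j
    funext i
    simp [Matrix.mul_apply, Matrix.mulVec, dotProduct]
  have main : ∀ j : ℕ, Hf ^ j * ρ = H' ^ j * ρ ∧ ∀ jk, P (fun i => (H' ^ j * ρ) i jk) := by
    intro j
    induction j with
    | zero => simpa [Matrix.one_mul] using hρ
    | succ j ih =>
      obtain ⟨ihe, ihP⟩ := ih
      have step : Hf * (H' ^ j * ρ) = H' * (H' ^ j * ρ) := by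
        ext i jk
        have h1 := congrFun (col_mul Hf (H' ^ j * ρ) jk) i
        have h2 := congrFun (col_mul H' (H' ^ j * ρ) jk) i
        rw [h1, h2, (hkey _ (ihP jk)).1]
      constructor
      · rw [pow_succ', pow_succ', mul_assoc, mul_assoc, ihe, step]
      · intro jk
        rw [pow_succ', mul_assoc, col_mul]
        exact (hkey _ (ihP jk)).2
  exact fun j => (main j).1

end Aux

open NormedSpace in
/-- Under the Hamiltonian DFS condition (`S_α k = c_α k` on an `H_S`-invariant subspace
`H̃`), if the initial state is `ρ_S ⊗ ρ_B` with `ρ_S` supported on `H̃`, then the reduced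
state `Tr_B[e^{-iHt} (ρ_S ⊗ ρ_B) e^{iHt}]` equals `U_S ρ_S U_S†` with
`U_S = e^{-iH_S t}`: the reduced evolution on `H̃` is unitary. -/
theorem stmt_6 {n m K : ℕ}
    (HS : Matrix (Fin n) (Fin n) ℂ) (HB : Matrix (Fin m) (Fin m) ℂ)
    (S : Fin K → Matrix (Fin n) (Fin n) ℂ) (B : Fin K → Matrix (Fin m) (Fin m) ℂ)
    (hHS : HS.IsHermitian) (hHB : HB.IsHermitian)
    (hSh : ∀ α, (S α).IsHermitian) (hBh : ∀ α, (B α).IsHermitian)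
    (Ht : Submodule ℂ (Fin n → ℂ)) (c : Fin K → ℂ)
    (hc : ∀ α, ∀ k ∈ Ht, (S α).mulVec k = c α • k)
    (hinv : ∀ k ∈ Ht, HS.mulVec k ∈ Ht)
    (ρS : Matrix (Fin n) (Fin n) ℂ) (hρSh : ρS.IsHermitian) (hρSpos : ρS.PosSemidef)
    (hρStr : ρS.trace = 1) (hρSsupp : ∀ v, ρS.mulVec v ∈ Ht)
    (ρB : Matrix (Fin m) (Fin m) ℂ) (hρBh : ρB.IsHermitian) (hρBpos : ρB.PosSemidef)
    (hρBtr : ρB.trace = 1) (t : ℝ) :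
    ptraceB
      (NormedSpace.exp ((-(Complex.I * t)) •
          (HS ⊗ₖ (1 : Matrix (Fin m) (Fin m) ℂ) + (1 : Matrix (Fin n) (Fin n) ℂ) ⊗ₖ HB +
            ∑ α, S α ⊗ₖ B α)) *
        (ρS ⊗ₖ ρB) *
        NormedSpace.exp ((Complex.I * t) •
          (HS ⊗ₖ (1 : Matrix (Fin m) (Fin m) ℂ) + (1 : Matrix (Fin n) (Fin n) ℂ) ⊗ₖ HB +
            ∑ α, S α ⊗ₖ B α))) =
      NormedSpace.exp ((-(Complex.I * t)) • HS) * ρS *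
        (NormedSpace.exp ((-(Complex.I * t)) • HS))ᴴ := by
  classical
  set z : ℂ := Complex.I * t with hz
  set Hf : Matrix (Fin n × Fin m) (Fin n × Fin m) ℂ :=
    HS ⊗ₖ (1 : Matrix (Fin m) (Fin m) ℂ) + (1 : Matrix (Fin n) (Fin n) ℂ) ⊗ₖ HB +
      ∑ α, S α ⊗ₖ B α with hHfdef
  set HB' : Matrix (Fin m) (Fin m) ℂ := HB + ∑ α, c α • B α with hHB'def
  set H' : Matrix (Fin n × Fin m) (Fin n × Fin m) ℂ :=
    HS ⊗ₖ (1 : Matrix (Fin m) (Fin m) ℂ) + (1 : Matrix (Fin n) (Fin n) ℂ) ⊗ₖ HB' with hH'def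
  set ρ : Matrix (Fin n × Fin m) (Fin n × Fin m) ℂ := ρS ⊗ₖ ρB with hρdef
  -- the coupling constants are real
  have hcreal : ∀ α, star (c α) = c α := by
    by_cases hbot : ∃ k ∈ Ht, k ≠ (0 : Fin n → ℂ)
    · obtain ⟨k, hk, hk0⟩ := hbot
      intro α
      have hq : (star k ⬝ᵥ k : ℂ) ≠ 0 := by
        rw [Ne, dotProduct_star_self_eq_zero]; exact hk0
      have hqs : star (star k ⬝ᵥ k : ℂ) = star k ⬝ᵥ k := by
        simp [dotProduct, mul_comm]
      have hps : star (star k ⬝ᵥ (S α).mulVec k : ℂ) = star k ⬝ᵥ (S α).mulVec k := by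
        conv_lhs => rw [star_dotProduct, star_star, star_mulVec, (hSh α).eq]
        rw [dotProduct_mulVec]
      have hp : (star k ⬝ᵥ (S α).mulVec k : ℂ) = c α * (star k ⬝ᵥ k) := by
        rw [hc α k hk, dotProduct_smul, smul_eq_mul]
      rw [hp, star_mul', hqs] at hps
      exact mul_right_cancel₀ hq hps
    · push_neg at hbot
      exfalso
      have hzρ : ρS = 0 := by
        ext i j
        have h0 := hbot _ (hρSsupp (Pi.single j 1))
        have := congrFun h0 i
        rw [Matrix.mulVec_single] at this
        simpa using this
      rw [hzρ] at hρStr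
      simp at hρStr
  -- Hermiticity
  have hHfh : Hfᴴ = Hf := by
    have hα : ∀ α : Fin K, (S α ⊗ₖ B α)ᴴ = S α ⊗ₖ B α := fun α => by
      rw [conjTranspose_kron, (hSh α).eq, (hBh α).eq]
    rw [hHfdef]
    simp only [conjTranspose_add, Matrix.conjTranspose_sum, conjTranspose_kron,
      Matrix.conjTranspose_one, hHS.eq, hHB.eq]
    congr 1
    exact Finset.sum_congr rfl fun α _ => by rw [(hSh α).eq, (hBh α).eq]
  have hHB'h : HB'ᴴ = HB' := by
    rw [hHB'def]
    simp [conjTranspose_add, Matrix.conjTranspose_sum, Matrix.conjTranspose_smul, hcreal,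
      hHB.eq, fun α => (hBh α).eq]
  have hH'h : H'ᴴ = H' := by
    rw [hH'def]
    simp [conjTranspose_add, conjTranspose_kron, hHS.eq, hHB'h]
  have hρh : ρᴴ = ρ := by
    rw [hρdef, conjTranspose_kron, hρSh.eq, hρBh.eq]
  -- columns of ρ lie in H̃ ⊗ H_B
  have hcolρ : ∀ jk : Fin n × Fin m, ∀ k : Fin m, (fun i => ρ (i,k) jk) ∈ Ht := by
    intro jk k
    have hcol : (fun i => ρ (i,k) jk) = ρB k jk.2 • (ρS.mulVec (Pi.single jk.1 1)) := by
      funext i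
      simp [hρdef, Matrix.mulVec_single, mul_comm]
    rw [hcol]
    exact Submodule.smul_mem _ _ (hρSsupp _)
  -- key exchange of Hamiltonians
  have hkey : ∀ x : Fin n × Fin m → ℂ, (∀ k, (fun i => x (i,k)) ∈ Ht) →
      Hf.mulVec x = H'.mulVec x ∧ ∀ k, (fun i => H'.mulVec x (i,k)) ∈ Ht :=
    fun x hx => key_slice HS HB S B Ht c hc hinv x hx
  have hpow : ∀ j : ℕ, Hf ^ j * ρ = H' ^ j * ρ :=
    pow_mul_eq Hf H' ρ (fun x => ∀ k, (fun i => x (i,k)) ∈ Ht) hkey (fun jk => hcolρ jk)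
  have hexpL : ∀ w : ℂ, exp (w • Hf) * ρ = exp (w • H') * ρ := by
    intro w
    apply exp_mul_congr
    intro j
    rw [smul_pow, smul_pow, smul_mul_assoc, smul_mul_assoc, hpow j]
  have hz2 : star (-z) = z := by
    rw [hz]
    simp [Complex.star_def, _root_.map_mul, Complex.conj_ofReal]
  have hstep1 : exp (z • Hf) = (exp ((-z) • Hf))ᴴ := by
    rw [← Matrix.exp_conjTranspose, Matrix.conjTranspose_smul, hHfh, hz2]
  have hstep2 : (exp ((-z) • H'))ᴴ = exp (z • H') := by
    rw [← Matrix.exp_conjTranspose, Matrix.conjTranspose_smul, hH'h, hz2]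
  have hexpR : ρ * exp (z • Hf) = ρ * exp (z • H') := by
    calc ρ * exp (z • Hf) = ρ * (exp ((-z) • Hf))ᴴ := by rw [hstep1]
      _ = (exp ((-z) • Hf) * ρᴴ)ᴴ := by
            rw [conjTranspose_mul, conjTranspose_conjTranspose]
      _ = (exp ((-z) • Hf) * ρ)ᴴ := by rw [hρh]
      _ = (exp ((-z) • H') * ρ)ᴴ := by rw [hexpL (-z)]
      _ = ρᴴ * (exp ((-z) • H'))ᴴ := conjTranspose_mul _ _
      _ = ρ * exp (z • H') := by rw [hρh, hstep2]
  have hinner : exp ((-z) • Hf) * ρ * exp (z • Hf)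
      = exp ((-z) • H') * ρ * exp (z • H') := by
    rw [hexpL (-z), mul_assoc, hexpR, ← mul_assoc]
  -- factor the effective Hamiltonian
  have hcomm : ∀ (X : Matrix (Fin n) (Fin n) ℂ) (Y : Matrix (Fin m) (Fin m) ℂ),
      Commute (X ⊗ₖ (1 : Matrix (Fin m) (Fin m) ℂ)) ((1 : Matrix (Fin n) (Fin n) ℂ) ⊗ₖ Y) := by
    intro X Y
    show _ * _ = _ * _
    rw [← Matrix.mul_kronecker_mul, ← Matrix.mul_kronecker_mul, one_mul, mul_one, one_mul,
      mul_one]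
  have hfactor : ∀ w : ℂ, exp (w • H') = exp (w • HS) ⊗ₖ exp (w • HB') := by
    intro w
    have hsplit : w • H' = (w • HS) ⊗ₖ (1 : Matrix (Fin m) (Fin m) ℂ) +
        (1 : Matrix (Fin n) (Fin n) ℂ) ⊗ₖ (w • HB') := by
      rw [hH'def, smul_add, Matrix.smul_kronecker, Matrix.kronecker_smul]
    rw [hsplit, Matrix.exp_add_of_commute _ _ (hcomm _ _), exp_kron_right, exp_kron_left,
      ← Matrix.mul_kronecker_mul, mul_one, one_mul]
  have htr : (exp ((-z) • HB') * ρB * exp (z • HB')).trace = 1 := by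
    rw [Matrix.trace_mul_cycle]
    have h1 : exp (z • HB') * exp ((-z) • HB') = 1 := by
      rw [← Matrix.exp_add_of_commute _ _ (((Commute.refl HB').smul_left z).smul_right (-z)),
        neg_smul, add_neg_cancel, exp_zero]
    rw [h1, one_mul, hρBtr]
  rw [hinner, hfactor (-z), hfactor z, hρdef, ← Matrix.mul_kronecker_mul,
    ← Matrix.mul_kronecker_mul, ptraceB_kron, htr, one_smul]
  have hconjS : (exp ((-z) • HS))ᴴ = exp (z • HS) := by
    rw [← Matrix.exp_conjTranspose, Matrix.conjTranspose_smul, hHS.eq, hz2]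
  rw [hconjS]
end

section
/- Consider 3 qubits and the collective operators S_α = ∑_{i=1}^3 σ_i^α for α ∈ {+,-,z}. The four states |½,0,½⟩ = (|010⟩-|100⟩)/√2, |½,0,-½⟩ = (|011⟩-|101⟩)/√2, |½,1,½⟩ = (-2|001⟩+|010⟩+|100⟩)/√6, |½,1,-½⟩ = (2|110⟩-|101⟩-|011⟩)/√6 are orthonormal, and the action of each S_α on the span of {|½,λ,½⟩, |½,λ,-½⟩} preserves it with matrix elements independent of λ ∈ {0,1}; explicitly, S_z|½,λ,±½⟩ = ±|½,λ,±½⟩, S_+|½,λ,-½⟩ = |½,λ,½⟩, S_+|½,λ,½⟩ = 0, S_-|½,λ,½⟩ = |½,λ,-½⟩, S_-|½,λ,-½⟩ = 0. -/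
open Matrix

/-- The operator acting as the one-qubit operator `A` on the `i`-th tensor factor of
`(ℂ²)^{⊗N}` (realized as functions `(Fin N → Fin 2) → ℂ`) and as identity elsewhere. -/
noncomputable def liftOp {N : ℕ} (i : Fin N) (A : Matrix (Fin 2) (Fin 2) ℂ) :
    Matrix (Fin N → Fin 2) (Fin N → Fin 2) ℂ :=
  fun x y => A (x i) (y i) * ∏ j ∈ Finset.univ.erase i, (if x j = y j then (1 : ℂ) else 0)

/-- `σ^z = |0⟩⟨0| - |1⟩⟨1|`. -/
noncomputable def sigmaz : Matrix (Fin 2) (Fin 2) ℂ := !![1, 0; 0, -1]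

/-- `σ^+ = |0⟩⟨1|`. -/
noncomputable def sigmap : Matrix (Fin 2) (Fin 2) ℂ := !![0, 1; 0, 0]

/-- `σ^- = |1⟩⟨0|`. -/
noncomputable def sigmam : Matrix (Fin 2) (Fin 2) ℂ := !![0, 0; 1, 0]

/-- Collective spin operator `S_A = ∑ᵢ A_i` on `N` qubits. -/
noncomputable def Scoll {N : ℕ} (A : Matrix (Fin 2) (Fin 2) ℂ) :
    Matrix (Fin N → Fin 2) (Fin N → Fin 2) ℂ :=
  ∑ i : Fin N, liftOp i A

/-- The computational basis state `|abc⟩` of 3 qubits. -/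
noncomputable def ket3 (a b c : Fin 2) : (Fin 3 → Fin 2) → ℂ :=
  fun f => if f = ![a, b, c] then 1 else 0

/-- The four `J = 1/2` states `|½, λ, μ⟩` of three qubits: `dfs3 λ μ` where `λ ∈ {0,1}` is
the degeneracy (subsystem) label and `μ = 0, 1` corresponds to `m_J = +½, -½`. -/
noncomputable def dfs3 : Fin 2 → Fin 2 → ((Fin 3 → Fin 2) → ℂ)
  | 0, 0 => ((1 / Real.sqrt 2 : ℝ) : ℂ) • (ket3 0 1 0 - ket3 1 0 0)
  | 0, 1 => ((1 / Real.sqrt 2 : ℝ) : ℂ) • (ket3 0 1 1 - ket3 1 0 1)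
  | 1, 0 => ((1 / Real.sqrt 6 : ℝ) : ℂ) • ((-2 : ℂ) • ket3 0 0 1 + ket3 0 1 0 + ket3 1 0 0)
  | 1, 1 => ((1 / Real.sqrt 6 : ℝ) : ℂ) • ((2 : ℂ) • ket3 1 1 0 - ket3 1 0 1 - ket3 0 1 1)

/-- Auxiliary equivalence enumerating three-qubit configurations. -/
def dfsAux_e3 : Fin 2 × Fin 2 × Fin 2 ≃ (Fin 3 → Fin 2) where
  toFun p := ![p.1, p.2.1, p.2.2]
  invFun f := (f 0, f 1, f 2)
  left_inv p := rfl
  right_inv f := by funext i; fin_cases i <;> rfl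

lemma dfsAux_sum_pi3 (g : (Fin 3 → Fin 2) → ℂ) :
    ∑ x, g x = ∑ a : Fin 2, ∑ b : Fin 2, ∑ c : Fin 2, g ![a, b, c] := by
  rw [← Fintype.sum_equiv dfsAux_e3 (fun p => g (dfsAux_e3 p)) g (fun p => rfl)]
  simp [Fintype.sum_prod_type, dfsAux_e3]
  rfl

lemma dfsAux_vec3_ext {v w : (Fin 3 → Fin 2) → ℂ}
    (h : ∀ a b c : Fin 2, v ![a, b, c] = w ![a, b, c]) : v = w :=
  funext fun x => by
    have hx : x = ![x 0, x 1, x 2] := by funext i; fin_cases i <;> rfl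
    rw [hx]; exact h _ _ _

lemma dfsAux_erase0 : (Finset.univ.erase (0 : Fin 3)) = {1, 2} := by decide
lemma dfsAux_erase1 : (Finset.univ.erase (1 : Fin 3)) = {0, 2} := by decide
lemma dfsAux_erase2 : (Finset.univ.erase (2 : Fin 3)) = {0, 1} := by decide

lemma dfsAux_scoll_apply (A : Matrix (Fin 2) (Fin 2) ℂ) (x y : Fin 3 → Fin 2) :
    Scoll A x y =
      A (x 0) (y 0) * ((if x 1 = y 1 then (1:ℂ) else 0) * (if x 2 = y 2 then (1:ℂ) else 0))
      + A (x 1) (y 1) * ((if x 0 = y 0 then (1:ℂ) else 0) * (if x 2 = y 2 then (1:ℂ) else 0))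
      + A (x 2) (y 2) * ((if x 0 = y 0 then (1:ℂ) else 0) * (if x 1 = y 1 then (1:ℂ) else 0)) := by
  simp [Scoll, Fin.sum_univ_three, liftOp, dfsAux_erase0, dfsAux_erase1, dfsAux_erase2,
    Finset.sum_apply, Finset.prod_insert, Finset.prod_singleton]

lemma dfsAux_dot3 (v w : (Fin 3 → Fin 2) → ℂ) :
    star v ⬝ᵥ w = ∑ a : Fin 2, ∑ b : Fin 2, ∑ c : Fin 2,
      star (v ![a, b, c]) * w ![a, b, c] :=
  dfsAux_sum_pi3 (fun y => star (v y) * w y)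

lemma dfsAux_mulVec (M : Matrix (Fin 3 → Fin 2) (Fin 3 → Fin 2) ℂ)
    (v : (Fin 3 → Fin 2) → ℂ) (x : Fin 3 → Fin 2) :
    M.mulVec v x = ∑ a : Fin 2, ∑ b : Fin 2, ∑ c : Fin 2,
      M x ![a, b, c] * v ![a, b, c] :=
  dfsAux_sum_pi3 (fun y => M x y * v y)

set_option maxHeartbeats 2000000 in
/-- The four states `|½, λ, ±½⟩` are orthonormal, and the collective operators
`S_z, S_+, S_-` act on the span of `{|½,λ,½⟩, |½,λ,-½⟩}` with matrix elements independent
of the degeneracy label `λ`: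
`S_z|½,λ,±½⟩ = ±|½,λ,±½⟩`, `S_+|½,λ,-½⟩ = |½,λ,½⟩`, `S_+|½,λ,½⟩ = 0`,
`S_-|½,λ,½⟩ = |½,λ,-½⟩`, `S_-|½,λ,-½⟩ = 0`. -/
theorem stmt_19 :
    (∀ lam mu lam' mu' : Fin 2,
      star (dfs3 lam mu) ⬝ᵥ dfs3 lam' mu' =
        if lam = lam' ∧ mu = mu' then 1 else 0) ∧
    (∀ lam : Fin 2,
      (Scoll (N := 3) sigmaz).mulVec (dfs3 lam 0) = dfs3 lam 0 ∧
      (Scoll (N := 3) sigmaz).mulVec (dfs3 lam 1) = -dfs3 lam 1 ∧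
      (Scoll (N := 3) sigmap).mulVec (dfs3 lam 1) = dfs3 lam 0 ∧
      (Scoll (N := 3) sigmap).mulVec (dfs3 lam 0) = 0 ∧
      (Scoll (N := 3) sigmam).mulVec (dfs3 lam 0) = dfs3 lam 1 ∧
      (Scoll (N := 3) sigmam).mulVec (dfs3 lam 1) = 0) := by
  constructor
  · intro lam mu lam' mu'
    fin_cases lam <;> fin_cases mu <;> fin_cases lam' <;> fin_cases mu' <;>
      rw [dfsAux_dot3] <;>
      simp (config := { decide := true })
        [dfs3, ket3, Fin.sum_univ_two, Complex.conj_ofNat] <;>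
      (try (field_simp; rw [← Complex.ofReal_pow, Real.sq_sqrt (by norm_num)]; norm_num))
  · intro lam
    refine ⟨?_, ?_, ?_, ?_, ?_, ?_⟩ <;>
      apply dfsAux_vec3_ext <;>
      intro a b c <;>
      rw [dfsAux_mulVec] <;>
      fin_cases lam <;> fin_cases a <;> fin_cases b <;> fin_cases c <;>
      simp (config := { decide := true })
        [dfsAux_scoll_apply, sigmaz, sigmap, sigmam, dfs3, ket3, Fin.sum_univ_two] <;>
      ring
end
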